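/- Let t₁ < t₂, let m : [t₁,t₂] → ℝ be continuous, and let b : [t₁,t₂] × ℝ^d → ℝ^d satisfy ⟨b(t,x) − b(t,y), x − y⟩ ≤ −m(t)·‖x − y‖² for all t ∈ [t₁,t₂] and x, y ∈ ℝ^d. If H, G : [t₁,t₂] → ℝ^d are differentiable and satisfy H'(t) − G'(t) = (1/2)(H(t) − G(t)) + b(t, H(t)) − b(t, G(t)) for all t ∈ [t₁,t₂], then for every t ∈ [t₁,t₂], ‖H(t) − G(t)‖ ≤ exp(−∫_{t₁}^{t} (m(s) − 1/2) ds)·‖H(t₁) − G(t₁)‖. -/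

import Mathlib

open MeasureTheory Real

/-- **Lemma (pathwise synchronous-coupling contraction).**
If `b(t,·)` satisfies `⟨b(t,x) − b(t,y), x − y⟩ ≤ −m(t)‖x − y‖²` and `H, G` are
differentiable with `H' − G' = (1/2)(H − G) + b(t,H) − b(t,G)` on `[t₁,t₂]`, then
`‖H(t) − G(t)‖ ≤ exp(−∫_{t₁}^t (m(s) − 1/2) ds)·‖H(t₁) − G(t₁)‖`. -/
theorem synchronous_coupling_contraction {d : ℕ}
    (t₁ t₂ : ℝ) (hlt : t₁ < t₂) (m : ℝ → ℝ)
    (hm : ContinuousOn m (Set.Icc t₁ t₂))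
    (b : ℝ → EuclideanSpace ℝ (Fin d) → EuclideanSpace ℝ (Fin d))
    (hb : ∀ t ∈ Set.Icc t₁ t₂, ∀ x y : EuclideanSpace ℝ (Fin d),
      (inner ℝ (b t x - b t y) (x - y) : ℝ) ≤ -m t * ‖x - y‖ ^ 2)
    (H G H' G' : ℝ → EuclideanSpace ℝ (Fin d))
    (hH : ∀ t ∈ Set.Icc t₁ t₂, HasDerivAt H (H' t) t)
    (hG : ∀ t ∈ Set.Icc t₁ t₂, HasDerivAt G (G' t) t)
    (hrel : ∀ t ∈ Set.Icc t₁ t₂,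
      H' t - G' t = (1 / 2 : ℝ) • (H t - G t) + (b t (H t) - b t (G t))) :
    ∀ t ∈ Set.Icc t₁ t₂,
      ‖H t - G t‖ ≤ Real.exp (-∫ s in t₁..t, (m s - 1 / 2)) * ‖H t₁ - G t₁‖ := by
  set D : ℝ → EuclideanSpace ℝ (Fin d) := fun t => H t - G t with hDdef
  -- continuous extension of m
  set m' : ℝ → ℝ := fun t => m (max t₁ (min t t₂)) with hm'def
  have hmapsto : ∀ t : ℝ, max t₁ (min t t₂) ∈ Set.Icc t₁ t₂ := by
    intro t
    constructor
    · exact le_max_left _ _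
    · exact max_le hlt.le (min_le_right _ _)
  have hm'cont : Continuous m' := by
    apply hm.comp_continuous
    · exact continuous_const.max (continuous_id.min continuous_const)
    · exact hmapsto
  have hm'eq : ∀ t ∈ Set.Icc t₁ t₂, m' t = m t := by
    intro t ht
    simp only [hm'def]
    rw [min_eq_left ht.2, max_eq_right ht.1]
  set A : ℝ → ℝ := fun t => ∫ s in t₁..t, (m' s - 1 / 2) with hAdef
  have hAd : ∀ t : ℝ, HasDerivAt A (m' t - 1 / 2) t := by
    intro t
    exact ((hm'cont.sub continuous_const).integral_hasStrictDerivAt t₁ t).hasDerivAt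
  set F : ℝ → ℝ := fun t => Real.exp (2 * A t) * (inner ℝ (D t) (D t) : ℝ) with hFdef
  have hDderiv : ∀ t ∈ Set.Icc t₁ t₂, HasDerivAt D (H' t - G' t) t := fun t ht =>
    (hH t ht).sub (hG t ht)
  have hFderiv : ∀ t ∈ Set.Icc t₁ t₂, HasDerivAt F
      (Real.exp (2 * A t) * (2 * (m' t - 1 / 2)) * (inner ℝ (D t) (D t) : ℝ) +
        Real.exp (2 * A t) *
          ((inner ℝ (D t) (H' t - G' t) : ℝ) + (inner ℝ (H' t - G' t) (D t) : ℝ))) t := by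
    intro t ht
    exact (((hAd t).const_mul 2).exp.mul
      (HasDerivAt.inner ℝ (hDderiv t ht) (hDderiv t ht)))
  have hFnonpos : ∀ t ∈ Set.Icc t₁ t₂, deriv F t ≤ 0 := by
    intro t ht
    rw [(hFderiv t ht).deriv]
    have hsym : (inner ℝ (D t) (H' t - G' t) : ℝ) = (inner ℝ (H' t - G' t) (D t) : ℝ) :=
      real_inner_comm _ _
    have hin : (inner ℝ (H' t - G' t) (D t) : ℝ) =
        (1 / 2 : ℝ) * ‖D t‖ ^ 2 + (inner ℝ (b t (H t) - b t (G t)) (D t) : ℝ) := by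
      rw [hrel t ht, inner_add_left, real_inner_smul_left, real_inner_self_eq_norm_sq]
    have hbnd : (inner ℝ (b t (H t) - b t (G t)) (D t) : ℝ) ≤ -m t * ‖D t‖ ^ 2 :=
      hb t ht (H t) (G t)
    have hDD : (inner ℝ (D t) (D t) : ℝ) = ‖D t‖ ^ 2 := real_inner_self_eq_norm_sq _
    rw [hsym, hin, hDD, hm'eq t ht]
    have hexp : (0 : ℝ) < Real.exp (2 * A t) := Real.exp_pos _
    nlinarith [sq_nonneg ‖D t‖]
  have hcont : ContinuousOn F (Set.Icc t₁ t₂) := fun t ht =>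
    ((hFderiv t ht).continuousAt).continuousWithinAt
  have hdiff : DifferentiableOn ℝ F (interior (Set.Icc t₁ t₂)) := by
    intro t ht
    exact ((hFderiv t (interior_subset ht)).differentiableAt).differentiableWithinAt
  have hanti : AntitoneOn F (Set.Icc t₁ t₂) :=
    antitoneOn_of_deriv_nonpos (convex_Icc _ _) hcont hdiff
      (fun t ht => hFnonpos t (interior_subset ht))
  intro t ht
  have hmem₁ : t₁ ∈ Set.Icc t₁ t₂ := Set.left_mem_Icc.2 hlt.le
  have hFle : F t ≤ F t₁ := hanti hmem₁ ht ht.1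
  have hA₁ : A t₁ = 0 := intervalIntegral.integral_same
  have hAeq : (∫ s in t₁..t, (m s - 1 / 2)) = A t := by
    refine intervalIntegral.integral_congr fun s hs => ?_
    rw [Set.uIcc_of_le ht.1] at hs
    rw [hm'eq s ⟨hs.1, hs.2.trans ht.2⟩]
  rw [hAeq]
  have key : ‖D t‖ ^ 2 ≤ (Real.exp (-A t) * ‖D t₁‖) ^ 2 := by
    have h1 : Real.exp (2 * A t) * ‖D t‖ ^ 2 ≤ ‖D t₁‖ ^ 2 := by
      have := hFle
      simp only [hFdef, hA₁, mul_zero, Real.exp_zero, one_mul,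
        real_inner_self_eq_norm_sq] at this
      exact this
    have hexp : (0 : ℝ) < Real.exp (2 * A t) := Real.exp_pos _
    have h2 : (Real.exp (-A t)) ^ 2 = (Real.exp (2 * A t))⁻¹ := by
      rw [← Real.exp_nat_mul, ← Real.exp_neg]
      norm_num
    rw [mul_pow, h2, ← div_eq_inv_mul, le_div_iff₀ hexp]
    linarith
  have h3 : 0 ≤ Real.exp (-A t) * ‖D t₁‖ := mul_nonneg (Real.exp_pos _).le (norm_nonneg _)
  calc ‖H t - G t‖ = ‖D t‖ := rfl
    _ ≤ Real.exp (-A t) * ‖D t₁‖ := by nlinarith [norm_nonneg (D t)]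
    _ = Real.exp (-A t) * ‖H t₁ - G t₁‖ := rfl
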